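/- (Identification of the local average treatment effect, Lemma 1.) Under unconfoundedness, positivity, monotonicity, and relevance, the IV estimand equals the average treatment effect among compliers: χ0 := Γ0 / Δ0 = E[Y1 − Y0 | A1 > A0], where Γ0 := E[m1(X) − m0(X)], Δ0 := E[ℓ1(X) − ℓ0(X)], and the right-hand side is the conditional expectation of Y1 − Y0 given the event {A1 = 1, A0 = 0}, which has positive probability. -/

import Mathlib

open MeasureTheory

lemma late_intg {Ω : Type*} [MeasurableSpace Ω] {P : Measure Ω} [IsFiniteMeasure P]
    {f : Ω → ℝ} (hf : Measurable f) {C : ℝ} (hC : ∀ ω, |f ω| ≤ C) : Integrable f P :=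
  (integrable_const C).mono' hf.aestronglyMeasurable (ae_of_all _ fun ω => by
    simpa [Real.norm_eq_abs] using hC ω)

/-- Upper bound a.e. for the "conditional expectation" l. -/
lemma late_ub {Ω : Type*} [MeasurableSpace Ω] (P : Measure Ω) [IsProbabilityMeasure P]
    {S : Type*} [MeasurableSpace S] (X : Ω → S) (hX : Measurable X)
    (ζ : Ω → ℝ) (hζ : Measurable ζ) (hζ01 : ∀ ω, ζ ω = 0 ∨ ζ ω = 1)
    (d : S → ℝ) (hd : Measurable d) (ε : ℝ) (hε : 0 < ε)
    (hdlb : ∀ x, ε ≤ d x) (hdub : ∀ x, d x ≤ 1)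
    (hVd : ∀ g : S → ℝ, Measurable g → (∃ C, ∀ x, |g x| ≤ C) →
      ∫ ω, ζ ω * g (X ω) ∂P = ∫ ω, d (X ω) * g (X ω) ∂P)
    (W : Ω → ℝ) (hW : Measurable W) (c : ℝ) (hWabs : ∀ ω, |W ω| ≤ c)
    (b : ℝ) (hWb : ∀ ω, W ω ≤ b)
    (l : S → ℝ) (hl : Measurable l)
    (hlv : ∀ g : S → ℝ, Measurable g → (∃ C, ∀ x, |g x| ≤ C) →
      ∫ ω, W ω * ζ ω * g (X ω) ∂P = ∫ ω, l (X ω) * ζ ω * g (X ω) ∂P) :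
    ∀ᵐ ω ∂P, l (X ω) ≤ b := by
  have hζnn : ∀ ω, 0 ≤ ζ ω := fun ω => by rcases hζ01 ω with h | h <;> simp [h]
  have hζle : ∀ ω, ζ ω ≤ 1 := fun ω => by rcases hζ01 ω with h | h <;> simp [h]
  -- step 1 : each truncated bad set is null
  have hBn : ∀ n : ℕ, P {ω | ζ ω = 1 ∧ b < l (X ω) ∧ l (X ω) ≤ b + (n+1)} = 0 := by
    intro n
    set g : S → ℝ := fun x => if b < l x ∧ l x ≤ b + (n+1) then 1 else 0 with hgdef
    have hsmeas : MeasurableSet {x | b < l x ∧ l x ≤ b + (n+1)} :=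
      (measurableSet_lt measurable_const hl).inter (measurableSet_le hl measurable_const)
    have hg : Measurable g := Measurable.ite hsmeas measurable_const measurable_const
    have hg01 : ∀ x, g x = 0 ∨ g x = 1 := fun x => by
      simp only [hgdef]; split_ifs <;> simp
    have hgb : ∀ x, |g x| ≤ 1 := fun x => by rcases hg01 x with h | h <;> simp [h]
    have hgpos : ∀ x, g x = 1 → b < l x ∧ l x ≤ b + (n+1) := fun x hx => by
      simp only [hgdef] at hx; split_ifs at hx with h
      · exact h
      · norm_num at hx
    have key := hlv g hg ⟨1, hgb⟩
    set F : Ω → ℝ := fun ω => (l (X ω) - b) * (ζ ω * g (X ω)) with hFdef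
    have hFmeas : Measurable F :=
      ((hl.comp hX).sub measurable_const).mul (hζ.mul (hg.comp hX))
    have hF0 : ∀ ω, 0 ≤ F ω := by
      intro ω
      rcases hg01 (X ω) with h | h
      · simp [hFdef, h]
      · obtain ⟨h1, _⟩ := hgpos _ h
        have : (0:ℝ) ≤ ζ ω * g (X ω) := by rw [h]; simpa using hζnn ω
        exact mul_nonneg (by linarith) this
    have hFbd : ∀ ω, |F ω| ≤ (n+1) := by
      intro ω
      rcases hg01 (X ω) with h | h
      · simp only [hFdef, h, mul_zero, abs_zero]; positivity
      · obtain ⟨h1, h2⟩ := hgpos _ h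
        have hz1 := hζnn ω; have hz2 := hζle ω
        rw [abs_of_nonneg (hF0 ω)]
        simp only [hFdef, h, mul_one]
        nlinarith
    have hFint : Integrable F P := late_intg hFmeas hFbd
    have hlζg_meas : Measurable fun ω => l (X ω) * (ζ ω * g (X ω)) :=
      (hl.comp hX).mul (hζ.mul (hg.comp hX))
    have hlζg_bd : ∀ ω, |l (X ω) * (ζ ω * g (X ω))| ≤ |b| + (n+1) := by
      intro ω
      rcases hg01 (X ω) with h | h
      · simp only [h, mul_zero, abs_zero]; positivity
      · obtain ⟨h1, h2⟩ := hgpos _ h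
        have hz1 := hζnn ω; have hz2 := hζle ω
        have hla : |l (X ω)| ≤ |b| + (n+1) := by
          rw [abs_le]
          constructor
          · nlinarith [neg_abs_le b]
          · nlinarith [le_abs_self b]
        calc |l (X ω) * (ζ ω * g (X ω))| = |l (X ω)| * |ζ ω * g (X ω)| := abs_mul _ _
          _ ≤ (|b| + (n+1)) * 1 := by
              apply mul_le_mul hla _ (abs_nonneg _) (by positivity)
              rw [h, mul_one, abs_of_nonneg hz1]; exact hz2
          _ = |b| + (n+1) := mul_one _
    have hlζg_int : Integrable (fun ω => l (X ω) * (ζ ω * g (X ω))) P :=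
      late_intg hlζg_meas hlζg_bd
    have hζg_meas : Measurable fun ω => ζ ω * g (X ω) := hζ.mul (hg.comp hX)
    have hζg_bd : ∀ ω, |ζ ω * g (X ω)| ≤ 1 := by
      intro ω
      rw [abs_mul]
      have h1 : |ζ ω| ≤ 1 := by rw [abs_of_nonneg (hζnn ω)]; exact hζle ω
      calc |ζ ω| * |g (X ω)| ≤ 1 * 1 := by
            exact mul_le_mul h1 (hgb _) (abs_nonneg _) one_pos.le
        _ = 1 := one_mul _
    have hζg_int : Integrable (fun ω => ζ ω * g (X ω)) P := late_intg hζg_meas hζg_bd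
    have hWζg_meas : Measurable fun ω => W ω * ζ ω * g (X ω) :=
      (hW.mul hζ).mul (hg.comp hX)
    have hWζg_bd : ∀ ω, |W ω * ζ ω * g (X ω)| ≤ |c| * 1 := by
      intro ω
      rw [abs_mul]
      apply mul_le_mul _ (hgb _) (abs_nonneg _) (abs_nonneg _)
      rw [abs_mul]
      have h1 : |ζ ω| ≤ 1 := by rw [abs_of_nonneg (hζnn ω)]; exact hζle ω
      calc |W ω| * |ζ ω| ≤ |c| * 1 := by
            exact mul_le_mul ((hWabs ω).trans (le_abs_self c)) h1 (abs_nonneg _) (abs_nonneg _)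
        _ = |c| := mul_one _
    have hWζg_int : Integrable (fun ω => W ω * ζ ω * g (X ω)) P :=
      late_intg hWζg_meas hWζg_bd
    -- ∫ F ≤ 0
    have hFle : ∫ ω, F ω ∂P ≤ 0 := by
      have hsplit : ∫ ω, F ω ∂P
          = ∫ ω, l (X ω) * (ζ ω * g (X ω)) ∂P - b * ∫ ω, ζ ω * g (X ω) ∂P := by
        rw [← integral_const_mul, ← integral_sub hlζg_int (hζg_int.const_mul b)]
        congr 1; funext ω; simp only [hFdef]; ring
      have hkey' : ∫ ω, l (X ω) * (ζ ω * g (X ω)) ∂P = ∫ ω, W ω * ζ ω * g (X ω) ∂P := by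
        rw [key]
        exact integral_congr_ae (Filter.Eventually.of_forall fun ω => by ring)
      have hmono : ∫ ω, W ω * ζ ω * g (X ω) ∂P ≤ ∫ ω, b * (ζ ω * g (X ω)) ∂P := by
        apply integral_mono hWζg_int (hζg_int.const_mul b)
        intro ω
        have : W ω * (ζ ω * g (X ω)) ≤ b * (ζ ω * g (X ω)) :=
          mul_le_mul_of_nonneg_right (hWb ω)
            (by rcases hg01 (X ω) with h | h <;> simp [h, hζnn ω])
        simpa [mul_assoc] using this
      rw [hsplit, hkey']
      rw [integral_const_mul] at hmono
      linarith
    have hFzero : ∫ ω, F ω ∂P = 0 :=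
      le_antisymm hFle (integral_nonneg fun ω => hF0 ω)
    have hFae : F =ᵐ[P] 0 :=
      (integral_eq_zero_iff_of_nonneg (fun ω => hF0 ω) hFint).1 hFzero
    have hsub : {ω | ζ ω = 1 ∧ b < l (X ω) ∧ l (X ω) ≤ b + (n+1)} ⊆ {ω | ¬ F ω = 0} := by
      intro ω ⟨h1, h2, h3⟩
      have hgx : g (X ω) = 1 := by simp only [hgdef]; rw [if_pos ⟨h2, h3⟩]
      have hpos : 0 < l (X ω) - b := sub_pos.2 h2
      simp only [Set.mem_setOf_eq, hFdef, h1, hgx, mul_one, one_mul]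
      exact hpos.ne'
    exact measure_mono_null hsub (ae_iff.1 hFae)
  -- step 2 : {ζ = 1 ∧ l(X) > b} is null
  have hbad : P {ω | ζ ω = 1 ∧ b < l (X ω)} = 0 := by
    refine measure_mono_null ?_ (measure_iUnion_null hBn)
    intro ω ⟨h1, h2⟩
    obtain ⟨n, hn⟩ := exists_nat_ge (l (X ω) - b)
    exact Set.mem_iUnion.2 ⟨n, h1, h2, by push_cast; linarith⟩
  -- step 3 : {l(X) > b} is null
  have hfin : P {ω | b < l (X ω)} = 0 := by
    set g : S → ℝ := fun x => if b < l x then 1 else 0 with hgdef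
    have hsmeas : MeasurableSet {x | b < l x} := measurableSet_lt measurable_const hl
    have hg : Measurable g := Measurable.ite hsmeas measurable_const measurable_const
    have hg01 : ∀ x, g x = 0 ∨ g x = 1 := fun x => by
      simp only [hgdef]; split_ifs <;> simp
    have hgb : ∀ x, |g x| ≤ 1 := fun x => by rcases hg01 x with h | h <;> simp [h]
    have hgnn : ∀ x, 0 ≤ g x := fun x => by rcases hg01 x with h | h <;> simp [h]
    have key := hVd g hg ⟨1, hgb⟩
    have hLzero : ∫ ω, ζ ω * g (X ω) ∂P = 0 := by
      have : (fun ω => ζ ω * g (X ω)) =ᵐ[P] 0 := by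
        rw [Filter.EventuallyEq, ae_iff]
        apply measure_mono_null _ hbad
        intro ω hω
        simp only [Set.mem_setOf_eq, Pi.zero_apply] at hω ⊢
        constructor
        · rcases hζ01 ω with h | h
          · exact absurd (by simp [h]) hω
          · exact h
        · by_contra hc
          exact hω (by simp only [hgdef]; rw [if_neg hc, mul_zero])
      rw [integral_congr_ae this]; simp
    have hgX_meas : Measurable fun ω => g (X ω) := hg.comp hX
    have hgX_int : Integrable (fun ω => g (X ω)) P := late_intg hgX_meas fun ω => hgb _
    have hdgX_int : Integrable (fun ω => d (X ω) * g (X ω)) P := by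
      apply late_intg ((hd.comp hX).mul hgX_meas)
      intro ω; show |d (X ω) * g (X ω)| ≤ _; rw [abs_mul]
      calc |d (X ω)| * |g (X ω)| ≤ 1 * 1 := by
            exact mul_le_mul (abs_le.2 ⟨by linarith [hdlb (X ω)], hdub _⟩) (hgb _)
              (abs_nonneg _) one_pos.le
        _ = 1 := one_mul _
    have hmono : ε * ∫ ω, g (X ω) ∂P ≤ ∫ ω, d (X ω) * g (X ω) ∂P := by
      rw [← integral_const_mul]
      apply integral_mono (hgX_int.const_mul ε) hdgX_int
      intro ω
      exact mul_le_mul_of_nonneg_right (hdlb _) (hgnn _)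
    have hgint_nonneg : 0 ≤ ∫ ω, g (X ω) ∂P := integral_nonneg fun ω => hgnn _
    have hgzero : ∫ ω, g (X ω) ∂P = 0 := by
      rw [← key] at hmono
      rw [hLzero] at hmono
      nlinarith
    have hgae : (fun ω => g (X ω)) =ᵐ[P] 0 :=
      (integral_eq_zero_iff_of_nonneg (fun ω => hgnn _) hgX_int).1 hgzero
    apply measure_mono_null _ (ae_iff.1 hgae)
    intro ω hω
    simp only [Set.mem_setOf_eq, Pi.zero_apply] at hω ⊢
    rw [hgdef]; simp only [if_pos hω]; norm_num
  rw [ae_iff]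
  convert hfin using 2
  simp [not_le]

/-- Lower bound a.e., by applying `late_ub` to negations. -/
lemma late_lb {Ω : Type*} [MeasurableSpace Ω] (P : Measure Ω) [IsProbabilityMeasure P]
    {S : Type*} [MeasurableSpace S] (X : Ω → S) (hX : Measurable X)
    (ζ : Ω → ℝ) (hζ : Measurable ζ) (hζ01 : ∀ ω, ζ ω = 0 ∨ ζ ω = 1)
    (d : S → ℝ) (hd : Measurable d) (ε : ℝ) (hε : 0 < ε)
    (hdlb : ∀ x, ε ≤ d x) (hdub : ∀ x, d x ≤ 1)
    (hVd : ∀ g : S → ℝ, Measurable g → (∃ C, ∀ x, |g x| ≤ C) →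
      ∫ ω, ζ ω * g (X ω) ∂P = ∫ ω, d (X ω) * g (X ω) ∂P)
    (W : Ω → ℝ) (hW : Measurable W) (c : ℝ) (hWabs : ∀ ω, |W ω| ≤ c)
    (a : ℝ) (hWb : ∀ ω, a ≤ W ω)
    (l : S → ℝ) (hl : Measurable l)
    (hlv : ∀ g : S → ℝ, Measurable g → (∃ C, ∀ x, |g x| ≤ C) →
      ∫ ω, W ω * ζ ω * g (X ω) ∂P = ∫ ω, l (X ω) * ζ ω * g (X ω) ∂P) :
    ∀ᵐ ω ∂P, a ≤ l (X ω) := by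
  have hlv' : ∀ g : S → ℝ, Measurable g → (∃ C, ∀ x, |g x| ≤ C) →
      ∫ ω, (-W ω) * ζ ω * g (X ω) ∂P = ∫ ω, (-l) (X ω) * ζ ω * g (X ω) ∂P := by
    intro g hg hgb
    have h1 : (fun ω => (-W ω) * ζ ω * g (X ω)) = fun ω => -(W ω * ζ ω * g (X ω)) := by
      funext ω; ring
    have h2 : (fun ω => (-l) (X ω) * ζ ω * g (X ω))
        = fun ω => -(l (X ω) * ζ ω * g (X ω)) := by
      funext ω; simp only [Pi.neg_apply]; ring
    rw [h1, h2, integral_neg, integral_neg, hlv g hg hgb]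
  have := late_ub P X hX ζ hζ hζ01 d hd ε hε hdlb hdub hVd (fun ω => -W ω) hW.neg c
    (fun ω => by simpa using hWabs ω) (-a) (fun ω => by simpa using hWb ω)
    (-l) hl.neg hlv'
  filter_upwards [this] with ω h
  simp only [Pi.neg_apply] at h
  linarith

/-- Main transfer lemma: the conditional-expectation function integrates to the
structural expectation. -/
lemma late_aux {Ω : Type*} [MeasurableSpace Ω] (P : Measure Ω) [IsProbabilityMeasure P]
    {S : Type*} [MeasurableSpace S] (X : Ω → S) (hX : Measurable X)
    (ζ : Ω → ℝ) (hζ : Measurable ζ) (hζ01 : ∀ ω, ζ ω = 0 ∨ ζ ω = 1)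
    (d : S → ℝ) (hd : Measurable d) (ε : ℝ) (hε : 0 < ε)
    (hdlb : ∀ x, ε ≤ d x) (hdub : ∀ x, d x ≤ 1)
    (hVd : ∀ g : S → ℝ, Measurable g → (∃ C, ∀ x, |g x| ≤ C) →
      ∫ ω, ζ ω * g (X ω) ∂P = ∫ ω, d (X ω) * g (X ω) ∂P)
    (W : Ω → ℝ) (hW : Measurable W) (a b : ℝ) (hWb : ∀ ω, a ≤ W ω ∧ W ω ≤ b)
    (V : Ω → ℝ) (hV : Measurable V) (hVb : ∀ ω, a ≤ V ω ∧ V ω ≤ b)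
    (hWV : ∀ ω, W ω * ζ ω = V ω * ζ ω)
    (hUV : ∀ g : S → ℝ, Measurable g → (∃ C, ∀ x, |g x| ≤ C) →
      ∫ ω, ζ ω * V ω * g (X ω) ∂P = ∫ ω, d (X ω) * V ω * g (X ω) ∂P)
    (l : S → ℝ) (hl : Measurable l)
    (hlv : ∀ g : S → ℝ, Measurable g → (∃ C, ∀ x, |g x| ≤ C) →
      ∫ ω, W ω * ζ ω * g (X ω) ∂P = ∫ ω, l (X ω) * ζ ω * g (X ω) ∂P) :
    Integrable (fun ω => l (X ω)) P ∧ ∫ ω, l (X ω) ∂P = ∫ ω, V ω ∂P := by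
  -- Ω is nonempty, hence a ≤ b
  have hne : Nonempty Ω := by
    by_contra h
    rw [not_nonempty_iff] at h
    have h1 : P Set.univ = 1 := measure_univ
    rw [Set.univ_eq_empty_iff.2 h, measure_empty] at h1
    exact zero_ne_one h1
  obtain ⟨ω0⟩ := hne
  have hab : a ≤ b := (hWb ω0).1.trans (hWb ω0).2
  set c : ℝ := max |a| |b| with hcdef
  have habs : ∀ x : ℝ, a ≤ x → x ≤ b → |x| ≤ c := by
    intro x h1 h2
    rw [abs_le]
    constructor
    · calc -c ≤ -|a| := by simp [hcdef]
        _ ≤ a := neg_abs_le a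
        _ ≤ x := h1
    · calc x ≤ b := h2
        _ ≤ |b| := le_abs_self b
        _ ≤ c := le_max_right _ _
  have hWabs : ∀ ω, |W ω| ≤ c := fun ω => habs _ (hWb ω).1 (hWb ω).2
  have hub := late_ub P X hX ζ hζ hζ01 d hd ε hε hdlb hdub hVd W hW c hWabs b
    (fun ω => (hWb ω).2) l hl hlv
  have hlb := late_lb P X hX ζ hζ hζ01 d hd ε hε hdlb hdub hVd W hW c hWabs a
    (fun ω => (hWb ω).1) l hl hlv
  have hae : ∀ᵐ ω ∂P, a ≤ l (X ω) ∧ l (X ω) ≤ b := hlb.and hub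
  -- clamped version
  set l' : S → ℝ := fun x => max a (min (l x) b) with hl'def
  have hl' : Measurable l' := measurable_const.max ((hl.min measurable_const))
  have hl'mem : ∀ x, a ≤ l' x ∧ l' x ≤ b := by
    intro x
    refine ⟨le_max_left _ _, ?_⟩
    simp only [hl'def]
    exact max_le hab (min_le_right _ _)
  have hl'bd : ∀ x, |l' x| ≤ c := fun x => habs _ (hl'mem x).1 (hl'mem x).2
  have hl'ae : (fun ω => l' (X ω)) =ᵐ[P] fun ω => l (X ω) := by
    filter_upwards [hae] with ω h
    simp only [hl'def]
    rw [min_eq_left h.2, max_eq_right h.1]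
  have hlint : Integrable (fun ω => l (X ω)) P :=
    (late_intg (hl'.comp hX) fun ω => hl'bd (X ω)).congr hl'ae
  refine ⟨hlint, ?_⟩
  -- the test function 1/d
  have hdne : ∀ x, d x ≠ 0 := fun x => (hε.trans_le (hdlb x)).ne'
  have hg : Measurable fun x => (d x)⁻¹ := hd.inv
  have hgbd : ∀ x, |(d x)⁻¹| ≤ ε⁻¹ := by
    intro x
    rw [abs_of_nonneg (inv_nonneg.2 (by linarith [hdlb x]))]
    exact inv_anti₀ hε (hdlb x)
  have hVabs : ∀ ω, |V ω| ≤ c := fun ω => habs _ (hVb ω).1 (hVb ω).2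
  have E2 := hVd (fun x => l' x * (d x)⁻¹) (hl'.mul hg)
    ⟨c * ε⁻¹, fun x => by
      rw [abs_mul]
      exact mul_le_mul (hl'bd x) (hgbd x) (abs_nonneg _)
        ((abs_nonneg a).trans (le_max_left _ _))⟩
  have E4 := hlv (fun x => (d x)⁻¹) hg ⟨ε⁻¹, hgbd⟩
  have E6 := hUV (fun x => (d x)⁻¹) hg ⟨ε⁻¹, hgbd⟩
  calc ∫ ω, l (X ω) ∂P
      = ∫ ω, l' (X ω) ∂P := integral_congr_ae hl'ae.symm
    _ = ∫ ω, d (X ω) * (l' (X ω) * (d (X ω))⁻¹) ∂P := by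
        refine integral_congr_ae (Filter.Eventually.of_forall fun ω => ?_)
        have hd0 := hdne (X ω)
        field_simp
    _ = ∫ ω, ζ ω * (l' (X ω) * (d (X ω))⁻¹) ∂P := E2.symm
    _ = ∫ ω, l (X ω) * ζ ω * (d (X ω))⁻¹ ∂P := by
        refine integral_congr_ae ?_
        filter_upwards [hl'ae] with ω h
        rw [h]; ring
    _ = ∫ ω, W ω * ζ ω * (d (X ω))⁻¹ ∂P := E4.symm
    _ = ∫ ω, ζ ω * V ω * (d (X ω))⁻¹ ∂P := by
        refine integral_congr_ae (Filter.Eventually.of_forall fun ω => ?_)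
        have h := hWV ω
        linear_combination (d (X ω))⁻¹ * h
    _ = ∫ ω, d (X ω) * V ω * (d (X ω))⁻¹ ∂P := E6
    _ = ∫ ω, V ω ∂P := by
        refine integral_congr_ae (Filter.Eventually.of_forall fun ω => ?_)
        have hd0 := hdne (X ω)
        field_simp

/-- Passing from the instrument `Z`/propensity `e` to `1 - Z`/`1 - e`. -/
lemma late_oneminus {Ω : Type*} [MeasurableSpace Ω] (P : Measure Ω) [IsProbabilityMeasure P]
    {S : Type*} [MeasurableSpace S] (X : Ω → S) (hX : Measurable X)
    (Z : Ω → ℝ) (hZ : Measurable Z) (hZb : ∀ ω, |Z ω| ≤ 1)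
    (e : S → ℝ) (he : Measurable e) (heb : ∀ x, |e x| ≤ 1)
    (V : Ω → ℝ) (hV : Measurable V) (cV : ℝ) (hVbd : ∀ ω, |V ω| ≤ cV)
    (h : ∀ g : S → ℝ, Measurable g → (∃ C, ∀ x, |g x| ≤ C) →
      ∫ ω, Z ω * V ω * g (X ω) ∂P = ∫ ω, e (X ω) * V ω * g (X ω) ∂P) :
    ∀ g : S → ℝ, Measurable g → (∃ C, ∀ x, |g x| ≤ C) →
      ∫ ω, (1 - Z ω) * V ω * g (X ω) ∂P = ∫ ω, (1 - e (X ω)) * V ω * g (X ω) ∂P := by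
  intro g hg hgb
  obtain ⟨C, hC⟩ := hgb
  have hVg_int : Integrable (fun ω => V ω * g (X ω)) P := by
    apply late_intg (hV.mul (hg.comp hX))
    intro ω; show |V ω * g (X ω)| ≤ _; rw [abs_mul]
    exact mul_le_mul (hVbd ω) (hC _) (abs_nonneg _) ((abs_nonneg _).trans (hVbd ω))
  have hbd2 : ∀ ω, |V ω * g (X ω)| ≤ cV * C := by
    intro ω; rw [abs_mul]
    exact mul_le_mul (hVbd ω) (hC _) (abs_nonneg _) ((abs_nonneg _).trans (hVbd ω))
  have hZVg_int : Integrable (fun ω => Z ω * V ω * g (X ω)) P := by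
    apply late_intg ((hZ.mul hV).mul (hg.comp hX))
    intro ω
    show |Z ω * V ω * g (X ω)| ≤ _
    have : Z ω * V ω * g (X ω) = Z ω * (V ω * g (X ω)) := by ring
    rw [this, abs_mul]
    calc |Z ω| * |V ω * g (X ω)| ≤ 1 * (cV * C) := by
          exact mul_le_mul (hZb ω) (hbd2 ω) (abs_nonneg _) one_pos.le
      _ = cV * C := one_mul _
  have heVg_int : Integrable (fun ω => e (X ω) * V ω * g (X ω)) P := by
    apply late_intg (((he.comp hX).mul hV).mul (hg.comp hX))
    intro ω
    show |e (X ω) * V ω * g (X ω)| ≤ _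
    have : e (X ω) * V ω * g (X ω) = e (X ω) * (V ω * g (X ω)) := by ring
    rw [this, abs_mul]
    calc |e (X ω)| * |V ω * g (X ω)| ≤ 1 * (cV * C) := by
          exact mul_le_mul (heb _) (hbd2 ω) (abs_nonneg _) one_pos.le
      _ = cV * C := one_mul _
  have h1 : (fun ω => (1 - Z ω) * V ω * g (X ω))
      = fun ω => V ω * g (X ω) - Z ω * V ω * g (X ω) := funext fun ω => by ring
  rw [h1, integral_sub hVg_int hZVg_int, h g hg ⟨C, hC⟩,
    ← integral_sub hVg_int heVg_int]
  exact integral_congr_ae (Filter.Eventually.of_forall fun ω => by ring)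

/-- Lemma 1, identification of the LATE: under unconfoundedness, positivity,
monotonicity and relevance, χ0 := Γ0/Δ0 = E[Y1 − Y0 | A1 > A0], where the complier event
{A1 = 1, A0 = 0} has positive probability. -/
theorem stmt_5
    {Ω : Type*} [MeasurableSpace Ω] (P : Measure Ω) [IsProbabilityMeasure P]
    {S : Type*} [mS : MeasurableSpace S]
    (X : Ω → S) (hX : Measurable X)
    (Z A0 A1 Y0 Y1 : Ω → ℝ)
    (hZ : Measurable Z) (hA0 : Measurable A0) (hA1 : Measurable A1)
    (hY0 : Measurable Y0) (hY1 : Measurable Y1)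
    (hZ01 : ∀ ω, Z ω = 0 ∨ Z ω = 1)
    (hA0_01 : ∀ ω, A0 ω = 0 ∨ A0 ω = 1)
    (hA1_01 : ∀ ω, A1 ω = 0 ∨ A1 ω = 1)
    (hY0b : ∃ C, ∀ ω, |Y0 ω| ≤ C) (hY1b : ∃ C, ∀ ω, |Y1 ω| ≤ C)
    (A Y : Ω → ℝ)
    (hA : A = fun ω => (1 - Z ω) * A0 ω + Z ω * A1 ω)
    (hY : Y = fun ω => (1 - A ω) * Y0 ω + A ω * Y1 ω)
    (e : S → ℝ) (he : Measurable e) (ε : ℝ) (hε : 0 < ε) (hε2 : ε < 1/2)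
    (hebd : ∀ x, ε ≤ e x ∧ e x ≤ 1 - ε)
    (hVe : ∀ g : S → ℝ, Measurable g → (∃ C, ∀ x, |g x| ≤ C) →
      ∫ ω, Z ω * g (X ω) ∂P = ∫ ω, e (X ω) * g (X ω) ∂P)
    (hUnconf : ∀ ψ : ℝ × ℝ × ℝ × ℝ → ℝ, Measurable ψ → (∃ C, ∀ v, |ψ v| ≤ C) →
      ∀ g : S → ℝ, Measurable g → (∃ C, ∀ x, |g x| ≤ C) →
      ∫ ω, Z ω * ψ (A0 ω, A1 ω, Y0 ω, Y1 ω) * g (X ω) ∂P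
        = ∫ ω, e (X ω) * ψ (A0 ω, A1 ω, Y0 ω, Y1 ω) * g (X ω) ∂P)
    (m0 m1 l0 l1 : S → ℝ)
    (hm0 : Measurable m0) (hm1 : Measurable m1)
    (hl0 : Measurable l0) (hl1 : Measurable l1)
    (hm0v : ∀ g : S → ℝ, Measurable g → (∃ C, ∀ x, |g x| ≤ C) →
      ∫ ω, Y ω * (if Z ω = 0 then (1:ℝ) else 0) * g (X ω) ∂P
        = ∫ ω, m0 (X ω) * (if Z ω = 0 then (1:ℝ) else 0) * g (X ω) ∂P)
    (hm1v : ∀ g : S → ℝ, Measurable g → (∃ C, ∀ x, |g x| ≤ C) →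
      ∫ ω, Y ω * (if Z ω = 1 then (1:ℝ) else 0) * g (X ω) ∂P
        = ∫ ω, m1 (X ω) * (if Z ω = 1 then (1:ℝ) else 0) * g (X ω) ∂P)
    (hl0v : ∀ g : S → ℝ, Measurable g → (∃ C, ∀ x, |g x| ≤ C) →
      ∫ ω, A ω * (if Z ω = 0 then (1:ℝ) else 0) * g (X ω) ∂P
        = ∫ ω, l0 (X ω) * (if Z ω = 0 then (1:ℝ) else 0) * g (X ω) ∂P)
    (hl1v : ∀ g : S → ℝ, Measurable g → (∃ C, ∀ x, |g x| ≤ C) →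
      ∫ ω, A ω * (if Z ω = 1 then (1:ℝ) else 0) * g (X ω) ∂P
        = ∫ ω, l1 (X ω) * (if Z ω = 1 then (1:ℝ) else 0) * g (X ω) ∂P)
    (hMono : P {ω | A0 ω ≤ A1 ω} = 1)
    (hRel : 0 < P {ω | A1 ω ≠ A0 ω}) :
    0 < P {ω | A1 ω = 1 ∧ A0 ω = 0}
    ∧ (∫ ω, (m1 (X ω) - m0 (X ω)) ∂P) / (∫ ω, (l1 (X ω) - l0 (X ω)) ∂P)
        = (∫ ω in {ω | A1 ω = 1 ∧ A0 ω = 0}, (Y1 ω - Y0 ω) ∂P)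
          / (P {ω | A1 ω = 1 ∧ A0 ω = 0}).toReal := by
  -- pointwise basics
  have hAmeas : Measurable A := by
    rw [hA]; exact ((measurable_const.sub hZ).mul hA0).add (hZ.mul hA1)
  have hA01 : ∀ ω, A ω = 0 ∨ A ω = 1 := by
    intro ω; rw [hA]
    rcases hZ01 ω with h | h <;> rcases hA0_01 ω with h0 | h0 <;>
      rcases hA1_01 ω with h1 | h1 <;> simp [h, h0, h1]
  have hYmeas : Measurable Y := by
    rw [hY]; exact ((measurable_const.sub hAmeas).mul hY0).add (hAmeas.mul hY1)
  obtain ⟨C0, hC0⟩ := hY0b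
  obtain ⟨C1, hC1⟩ := hY1b
  set B : ℝ := |C0| + |C1| with hBdef
  have hB0 : 0 ≤ B := add_nonneg (abs_nonneg _) (abs_nonneg _)
  have hY0B : ∀ ω, |Y0 ω| ≤ B := fun ω => (hC0 ω).trans (by
    calc C0 ≤ |C0| := le_abs_self _
      _ ≤ B := by simp [hBdef, abs_nonneg])
  have hY1B : ∀ ω, |Y1 ω| ≤ B := fun ω => (hC1 ω).trans (by
    calc C1 ≤ |C1| := le_abs_self _
      _ ≤ B := by simp [hBdef, abs_nonneg])
  have hAb : ∀ ω, 0 ≤ A ω ∧ A ω ≤ 1 := fun ω => by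
    rcases hA01 ω with h | h <;> simp [h]
  have hYb : ∀ ω, -B ≤ Y ω ∧ Y ω ≤ B := by
    intro ω
    rcases hA01 ω with h | h
    · have h0 := abs_le.1 (hY0B ω)
      rw [hY]; simp only [h]; norm_num; exact h0
    · have h1 := abs_le.1 (hY1B ω)
      rw [hY]; simp only [h]; norm_num; exact h1
  -- the instruments Z, 1-Z and propensities e, 1-e
  have hZb : ∀ ω, |Z ω| ≤ 1 := fun ω => by rcases hZ01 ω with h | h <;> simp [h]
  have heb1 : ∀ x, |e x| ≤ 1 := fun x =>
    abs_le.2 ⟨by linarith [(hebd x).1], by linarith [(hebd x).2]⟩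
  have helb : ∀ x, ε ≤ e x := fun x => (hebd x).1
  have heub : ∀ x, e x ≤ 1 := fun x => by linarith [(hebd x).2]
  have h1elb : ∀ x, ε ≤ 1 - e x := fun x => by linarith [(hebd x).2]
  have h1eub : ∀ x, 1 - e x ≤ 1 := fun x => by linarith [(hebd x).1]
  have hZ'01 : ∀ ω, 1 - Z ω = 0 ∨ 1 - Z ω = 1 := fun ω => by
    rcases hZ01 ω with h | h
    · right; rw [h]; ring
    · left; rw [h]; ring
  -- rewrite the conditional-mean identities using Z and 1 - Z
  have hZif1 : ∀ ω, (if Z ω = 1 then (1:ℝ) else 0) = Z ω := fun ω => by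
    rcases hZ01 ω with h | h <;> simp [h]
  have hZif0 : ∀ ω, (if Z ω = 0 then (1:ℝ) else 0) = 1 - Z ω := fun ω => by
    rcases hZ01 ω with h | h <;> simp [h]
  have hl1v' : ∀ g : S → ℝ, Measurable g → (∃ C, ∀ x, |g x| ≤ C) →
      ∫ ω, A ω * Z ω * g (X ω) ∂P = ∫ ω, l1 (X ω) * Z ω * g (X ω) ∂P := by
    intro g hg hgb
    have h1 : (fun ω => A ω * Z ω * g (X ω))
        = fun ω => A ω * (if Z ω = 1 then (1:ℝ) else 0) * g (X ω) :=
      funext fun ω => by rw [hZif1]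
    have h2 : (fun ω => l1 (X ω) * Z ω * g (X ω))
        = fun ω => l1 (X ω) * (if Z ω = 1 then (1:ℝ) else 0) * g (X ω) :=
      funext fun ω => by rw [hZif1]
    rw [h1, h2]; exact hl1v g hg hgb
  have hl0v' : ∀ g : S → ℝ, Measurable g → (∃ C, ∀ x, |g x| ≤ C) →
      ∫ ω, A ω * (1 - Z ω) * g (X ω) ∂P = ∫ ω, l0 (X ω) * (1 - Z ω) * g (X ω) ∂P := by
    intro g hg hgb
    have h1 : (fun ω => A ω * (1 - Z ω) * g (X ω))
        = fun ω => A ω * (if Z ω = 0 then (1:ℝ) else 0) * g (X ω) :=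
      funext fun ω => by rw [hZif0]
    have h2 : (fun ω => l0 (X ω) * (1 - Z ω) * g (X ω))
        = fun ω => l0 (X ω) * (if Z ω = 0 then (1:ℝ) else 0) * g (X ω) :=
      funext fun ω => by rw [hZif0]
    rw [h1, h2]; exact hl0v g hg hgb
  have hm1v' : ∀ g : S → ℝ, Measurable g → (∃ C, ∀ x, |g x| ≤ C) →
      ∫ ω, Y ω * Z ω * g (X ω) ∂P = ∫ ω, m1 (X ω) * Z ω * g (X ω) ∂P := by
    intro g hg hgb
    have h1 : (fun ω => Y ω * Z ω * g (X ω))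
        = fun ω => Y ω * (if Z ω = 1 then (1:ℝ) else 0) * g (X ω) :=
      funext fun ω => by rw [hZif1]
    have h2 : (fun ω => m1 (X ω) * Z ω * g (X ω))
        = fun ω => m1 (X ω) * (if Z ω = 1 then (1:ℝ) else 0) * g (X ω) :=
      funext fun ω => by rw [hZif1]
    rw [h1, h2]; exact hm1v g hg hgb
  have hm0v' : ∀ g : S → ℝ, Measurable g → (∃ C, ∀ x, |g x| ≤ C) →
      ∫ ω, Y ω * (1 - Z ω) * g (X ω) ∂P = ∫ ω, m0 (X ω) * (1 - Z ω) * g (X ω) ∂P := by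
    intro g hg hgb
    have h1 : (fun ω => Y ω * (1 - Z ω) * g (X ω))
        = fun ω => Y ω * (if Z ω = 0 then (1:ℝ) else 0) * g (X ω) :=
      funext fun ω => by rw [hZif0]
    have h2 : (fun ω => m0 (X ω) * (1 - Z ω) * g (X ω))
        = fun ω => m0 (X ω) * (if Z ω = 0 then (1:ℝ) else 0) * g (X ω) :=
      funext fun ω => by rw [hZif0]
    rw [h1, h2]; exact hm0v g hg hgb
  -- hVd for 1 - Z
  have hVe1 : ∀ g : S → ℝ, Measurable g → (∃ C, ∀ x, |g x| ≤ C) →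
      ∫ ω, Z ω * (1:ℝ) * g (X ω) ∂P = ∫ ω, e (X ω) * (1:ℝ) * g (X ω) ∂P := by
    intro g hg hgb
    simpa [mul_one] using hVe g hg hgb
  have hVe0 : ∀ g : S → ℝ, Measurable g → (∃ C, ∀ x, |g x| ≤ C) →
      ∫ ω, (1 - Z ω) * g (X ω) ∂P = ∫ ω, (1 - e (X ω)) * g (X ω) ∂P := by
    intro g hg hgb
    have := late_oneminus P X hX Z hZ hZb e he heb1 (fun _ => (1:ℝ)) measurable_const 1
      (fun ω => by norm_num) hVe1 g hg hgb
    simpa [mul_one] using this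
  -- unconfoundedness instances
  -- ψ for A1
  have hmeas21 : Measurable fun v : ℝ × ℝ × ℝ × ℝ => v.2.1 := measurable_fst.comp measurable_snd
  have hmeas1 : Measurable fun v : ℝ × ℝ × ℝ × ℝ => v.1 := measurable_fst
  have hmeas221 : Measurable fun v : ℝ × ℝ × ℝ × ℝ => v.2.2.1 :=
    measurable_fst.comp (measurable_snd.comp measurable_snd)
  have hmeas222 : Measurable fun v : ℝ × ℝ × ℝ × ℝ => v.2.2.2 :=
    measurable_snd.comp (measurable_snd.comp measurable_snd)
  set ψA1 : ℝ × ℝ × ℝ × ℝ → ℝ := fun v => max 0 (min v.2.1 1) with hψA1def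
  have hψA1meas : Measurable ψA1 := measurable_const.max (hmeas21.min measurable_const)
  have hψA1bd : ∀ v, |ψA1 v| ≤ 1 := by
    intro v
    rw [abs_le]
    exact ⟨le_trans (by norm_num) (le_max_left _ _), max_le (by norm_num) (min_le_right _ _)⟩
  have hψA1eq : ∀ ω, ψA1 (A0 ω, A1 ω, Y0 ω, Y1 ω) = A1 ω := by
    intro ω; rcases hA1_01 ω with h | h <;> simp [hψA1def, h]
  set ψA0 : ℝ × ℝ × ℝ × ℝ → ℝ := fun v => max 0 (min v.1 1) with hψA0def
  have hψA0meas : Measurable ψA0 := measurable_const.max (hmeas1.min measurable_const)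
  have hψA0bd : ∀ v, |ψA0 v| ≤ 1 := by
    intro v
    rw [abs_le]
    exact ⟨le_trans (by norm_num) (le_max_left _ _), max_le (by norm_num) (min_le_right _ _)⟩
  have hψA0eq : ∀ ω, ψA0 (A0 ω, A1 ω, Y0 ω, Y1 ω) = A0 ω := by
    intro ω; rcases hA0_01 ω with h | h <;> simp [hψA0def, h]
  -- T1, T0 and their ψ's
  set T1 : Ω → ℝ := fun ω => (1 - A1 ω) * Y0 ω + A1 ω * Y1 ω with hT1def
  set T0 : Ω → ℝ := fun ω => (1 - A0 ω) * Y0 ω + A0 ω * Y1 ω with hT0def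
  have hT1meas : Measurable T1 := ((measurable_const.sub hA1).mul hY0).add (hA1.mul hY1)
  have hT0meas : Measurable T0 := ((measurable_const.sub hA0).mul hY0).add (hA0.mul hY1)
  have hT1b : ∀ ω, -B ≤ T1 ω ∧ T1 ω ≤ B := by
    intro ω
    rcases hA1_01 ω with h | h
    · have h0 := abs_le.1 (hY0B ω)
      simp only [hT1def, h]; norm_num; exact h0
    · have h1 := abs_le.1 (hY1B ω)
      simp only [hT1def, h]; norm_num; exact h1
  have hT0b : ∀ ω, -B ≤ T0 ω ∧ T0 ω ≤ B := by
    intro ω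
    rcases hA0_01 ω with h | h
    · have h0 := abs_le.1 (hY0B ω)
      simp only [hT0def, h]; norm_num; exact h0
    · have h1 := abs_le.1 (hY1B ω)
      simp only [hT0def, h]; norm_num; exact h1
  set ψT1 : ℝ × ℝ × ℝ × ℝ → ℝ := fun v =>
    max (-B) (min ((1 - max 0 (min v.2.1 1)) * v.2.2.1 + max 0 (min v.2.1 1) * v.2.2.2) B)
    with hψT1def
  set ψT0 : ℝ × ℝ × ℝ × ℝ → ℝ := fun v =>
    max (-B) (min ((1 - max 0 (min v.1 1)) * v.2.2.1 + max 0 (min v.1 1) * v.2.2.2) B)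
    with hψT0def
  have hψT1meas : Measurable ψT1 := by
    apply measurable_const.max
    apply Measurable.min _ measurable_const
    exact ((measurable_const.sub (measurable_const.max (hmeas21.min measurable_const))).mul
      hmeas221).add ((measurable_const.max (hmeas21.min measurable_const)).mul hmeas222)
  have hψT0meas : Measurable ψT0 := by
    apply measurable_const.max
    apply Measurable.min _ measurable_const
    exact ((measurable_const.sub (measurable_const.max (hmeas1.min measurable_const))).mul
      hmeas221).add ((measurable_const.max (hmeas1.min measurable_const)).mul hmeas222)
  have hclampbd : ∀ x : ℝ, |max (-B) (min x B)| ≤ B := by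
    intro x
    rw [abs_le]
    exact ⟨le_max_left _ _, max_le (by linarith) (min_le_right _ _)⟩
  have hψT1bd : ∀ v, |ψT1 v| ≤ B := fun v => hclampbd _
  have hψT0bd : ∀ v, |ψT0 v| ≤ B := fun v => hclampbd _
  have hψT1eq : ∀ ω, ψT1 (A0 ω, A1 ω, Y0 ω, Y1 ω) = T1 ω := by
    intro ω
    have hclamp : ∀ y : Ω → ℝ, (∀ ω, |y ω| ≤ B) → max (-B) (min (y ω) B) = y ω := by
      intro y hy
      rw [min_eq_left (abs_le.1 (hy ω)).2, max_eq_right (abs_le.1 (hy ω)).1]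
    rcases hA1_01 ω with h | h
    · simp only [hψT1def, hT1def, h]
      norm_num
      exact hclamp Y0 hY0B
    · simp only [hψT1def, hT1def, h]
      norm_num
      exact hclamp Y1 hY1B
  have hψT0eq : ∀ ω, ψT0 (A0 ω, A1 ω, Y0 ω, Y1 ω) = T0 ω := by
    intro ω
    have hclamp : ∀ y : Ω → ℝ, (∀ ω, |y ω| ≤ B) → max (-B) (min (y ω) B) = y ω := by
      intro y hy
      rw [min_eq_left (abs_le.1 (hy ω)).2, max_eq_right (abs_le.1 (hy ω)).1]
    rcases hA0_01 ω with h | h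
    · simp only [hψT0def, hT0def, h]
      norm_num
      exact hclamp Y0 hY0B
    · simp only [hψT0def, hT0def, h]
      norm_num
      exact hclamp Y1 hY1B
  -- hUV instances for Z
  have hUVA1 : ∀ g : S → ℝ, Measurable g → (∃ C, ∀ x, |g x| ≤ C) →
      ∫ ω, Z ω * A1 ω * g (X ω) ∂P = ∫ ω, e (X ω) * A1 ω * g (X ω) ∂P := by
    intro g hg hgb
    have h := hUnconf ψA1 hψA1meas ⟨1, hψA1bd⟩ g hg hgb
    have h1 : (fun ω => Z ω * ψA1 (A0 ω, A1 ω, Y0 ω, Y1 ω) * g (X ω))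
        = fun ω => Z ω * A1 ω * g (X ω) := funext fun ω => by rw [hψA1eq]
    have h2 : (fun ω => e (X ω) * ψA1 (A0 ω, A1 ω, Y0 ω, Y1 ω) * g (X ω))
        = fun ω => e (X ω) * A1 ω * g (X ω) := funext fun ω => by rw [hψA1eq]
    rwa [h1, h2] at h
  have hUVA0 : ∀ g : S → ℝ, Measurable g → (∃ C, ∀ x, |g x| ≤ C) →
      ∫ ω, Z ω * A0 ω * g (X ω) ∂P = ∫ ω, e (X ω) * A0 ω * g (X ω) ∂P := by
    intro g hg hgb
    have h := hUnconf ψA0 hψA0meas ⟨1, hψA0bd⟩ g hg hgb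
    have h1 : (fun ω => Z ω * ψA0 (A0 ω, A1 ω, Y0 ω, Y1 ω) * g (X ω))
        = fun ω => Z ω * A0 ω * g (X ω) := funext fun ω => by rw [hψA0eq]
    have h2 : (fun ω => e (X ω) * ψA0 (A0 ω, A1 ω, Y0 ω, Y1 ω) * g (X ω))
        = fun ω => e (X ω) * A0 ω * g (X ω) := funext fun ω => by rw [hψA0eq]
    rwa [h1, h2] at h
  have hUVT1 : ∀ g : S → ℝ, Measurable g → (∃ C, ∀ x, |g x| ≤ C) →
      ∫ ω, Z ω * T1 ω * g (X ω) ∂P = ∫ ω, e (X ω) * T1 ω * g (X ω) ∂P := by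
    intro g hg hgb
    have h := hUnconf ψT1 hψT1meas ⟨B, hψT1bd⟩ g hg hgb
    have h1 : (fun ω => Z ω * ψT1 (A0 ω, A1 ω, Y0 ω, Y1 ω) * g (X ω))
        = fun ω => Z ω * T1 ω * g (X ω) := funext fun ω => by rw [hψT1eq]
    have h2 : (fun ω => e (X ω) * ψT1 (A0 ω, A1 ω, Y0 ω, Y1 ω) * g (X ω))
        = fun ω => e (X ω) * T1 ω * g (X ω) := funext fun ω => by rw [hψT1eq]
    rwa [h1, h2] at h
  have hUVT0 : ∀ g : S → ℝ, Measurable g → (∃ C, ∀ x, |g x| ≤ C) →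
      ∫ ω, Z ω * T0 ω * g (X ω) ∂P = ∫ ω, e (X ω) * T0 ω * g (X ω) ∂P := by
    intro g hg hgb
    have h := hUnconf ψT0 hψT0meas ⟨B, hψT0bd⟩ g hg hgb
    have h1 : (fun ω => Z ω * ψT0 (A0 ω, A1 ω, Y0 ω, Y1 ω) * g (X ω))
        = fun ω => Z ω * T0 ω * g (X ω) := funext fun ω => by rw [hψT0eq]
    have h2 : (fun ω => e (X ω) * ψT0 (A0 ω, A1 ω, Y0 ω, Y1 ω) * g (X ω))
        = fun ω => e (X ω) * T0 ω * g (X ω) := funext fun ω => by rw [hψT0eq]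
    rwa [h1, h2] at h
  -- hUV instances for 1 - Z
  have hA0abs : ∀ ω, |A0 ω| ≤ 1 := fun ω => by rcases hA0_01 ω with h | h <;> simp [h]
  have hT0abs : ∀ ω, |T0 ω| ≤ B := fun ω => abs_le.2 ⟨(hT0b ω).1, (hT0b ω).2⟩
  have hUVA0' := late_oneminus P X hX Z hZ hZb e he heb1 A0 hA0 1 hA0abs hUVA0
  have hUVT0' := late_oneminus P X hX Z hZ hZb e he heb1 T0 hT0meas B hT0abs hUVT0
  -- pointwise equalities W * ζ = V * ζ
  have hWVA1 : ∀ ω, A ω * Z ω = A1 ω * Z ω := by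
    intro ω; rcases hZ01 ω with h | h <;> rw [hA] <;> simp [h]
  have hWVA0 : ∀ ω, A ω * (1 - Z ω) = A0 ω * (1 - Z ω) := by
    intro ω; rcases hZ01 ω with h | h <;> rw [hA] <;> simp [h]
  have hAZ : ∀ ω, A ω * Z ω = A1 ω * Z ω := hWVA1
  have hWVT1 : ∀ ω, Y ω * Z ω = T1 ω * Z ω := by
    intro ω
    rcases hZ01 ω with h | h
    · simp [h]
    · have hAeq : A ω = A1 ω := by rw [hA]; simp [h]
      rw [hY]; simp only [hT1def, h, mul_one, hAeq]
  have hWVT0 : ∀ ω, Y ω * (1 - Z ω) = T0 ω * (1 - Z ω) := by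
    intro ω
    rcases hZ01 ω with h | h
    · have hAeq : A ω = A0 ω := by rw [hA]; simp [h]
      rw [hY]; simp only [hT0def, h, hAeq]; try ring
    · simp [h]
  -- apply the transfer lemma four times
  obtain ⟨hl1int, hl1eq⟩ := late_aux P X hX Z hZ hZ01 e he ε hε helb heub hVe
    A hAmeas 0 1 hAb A1 hA1 (fun ω => by rcases hA1_01 ω with h | h <;> simp [h])
    hWVA1 hUVA1 l1 hl1 hl1v'
  obtain ⟨hl0int, hl0eq⟩ := late_aux P X hX (fun ω => 1 - Z ω) (measurable_const.sub hZ)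
    hZ'01 (fun x => 1 - e x) (measurable_const.sub he) ε hε h1elb h1eub hVe0
    A hAmeas 0 1 hAb A0 hA0 (fun ω => by rcases hA0_01 ω with h | h <;> simp [h])
    hWVA0 hUVA0' l0 hl0 hl0v'
  obtain ⟨hm1int, hm1eq⟩ := late_aux P X hX Z hZ hZ01 e he ε hε helb heub hVe
    Y hYmeas (-B) B hYb T1 hT1meas hT1b hWVT1 hUVT1 m1 hm1 hm1v'
  obtain ⟨hm0int, hm0eq⟩ := late_aux P X hX (fun ω => 1 - Z ω) (measurable_const.sub hZ)
    hZ'01 (fun x => 1 - e x) (measurable_const.sub he) ε hε h1elb h1eub hVe0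
    Y hYmeas (-B) B hYb T0 hT0meas hT0b hWVT0 hUVT0' m0 hm0 hm0v'
  -- the complier event
  set C : Set Ω := {ω | A1 ω = 1 ∧ A0 ω = 0} with hCdef
  have hCmeas : MeasurableSet C := by
    have : C = A1 ⁻¹' {1} ∩ A0 ⁻¹' {0} := by ext ω; simp [hCdef]
    rw [this]
    exact (hA1 (measurableSet_singleton 1)).inter (hA0 (measurableSet_singleton 0))
  have hnull : P {ω | ¬ A0 ω ≤ A1 ω} = 0 := by
    have hms : MeasurableSet {ω | A0 ω ≤ A1 ω} := measurableSet_le hA0 hA1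
    have h := measure_compl hms (measure_ne_top P _)
    rw [hMono, measure_univ] at h
    simpa [Set.compl_setOf] using h
  have hPC : 0 < P C := by
    have hsub : {ω | A1 ω ≠ A0 ω} ⊆ C ∪ {ω | ¬ A0 ω ≤ A1 ω} := by
      intro ω h
      by_cases hle : A0 ω ≤ A1 ω
      · left
        rcases hA0_01 ω with h0 | h0 <;> rcases hA1_01 ω with h1 | h1 <;>
          simp [hCdef, h0, h1] at h hle ⊢ <;> norm_num at hle
      · right; exact hle
    have := hRel.trans_le ((measure_mono hsub).trans (measure_union_le _ _))
    rwa [hnull, add_zero] at this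
  have haemono : ∀ᵐ ω ∂P, A0 ω ≤ A1 ω := by
    rw [ae_iff]; exact hnull
  -- a.e. indicator identities
  have hind : ∀ᵐ ω ∂P, A1 ω - A0 ω = C.indicator (fun _ => (1:ℝ)) ω := by
    filter_upwards [haemono] with ω hle
    rcases hA0_01 ω with h0 | h0 <;> rcases hA1_01 ω with h1 | h1
    · rw [Set.indicator_of_notMem (by simp [hCdef, h1])]
      rw [h0, h1]; ring
    · rw [Set.indicator_of_mem (by simp [hCdef, h0, h1])]
      rw [h0, h1]; ring
    · rw [h0, h1] at hle; norm_num at hle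
    · rw [Set.indicator_of_notMem (by simp [hCdef, h0])]
      rw [h0, h1]; ring
  have hindY : ∀ᵐ ω ∂P, (A1 ω - A0 ω) * (Y1 ω - Y0 ω)
      = C.indicator (fun ω => Y1 ω - Y0 ω) ω := by
    filter_upwards [haemono] with ω hle
    rcases hA0_01 ω with h0 | h0 <;> rcases hA1_01 ω with h1 | h1
    · rw [Set.indicator_of_notMem (by simp [hCdef, h1])]
      rw [h0, h1]; ring
    · rw [Set.indicator_of_mem (by simp [hCdef, h0, h1])]
      rw [h0, h1]; ring
    · rw [h0, h1] at hle; norm_num at hle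
    · rw [Set.indicator_of_notMem (by simp [hCdef, h0])]
      rw [h0, h1]; ring
  -- integrabilities of the structural objects
  have hA1abs : ∀ ω, |A1 ω| ≤ 1 := fun ω => by rcases hA1_01 ω with h | h <;> simp [h]
  have hA1int : Integrable A1 P := late_intg hA1 hA1abs
  have hA0int : Integrable A0 P := late_intg hA0 hA0abs
  have hT1abs : ∀ ω, |T1 ω| ≤ B := fun ω => abs_le.2 ⟨(hT1b ω).1, (hT1b ω).2⟩
  have hT1int : Integrable T1 P := late_intg hT1meas hT1abs
  have hT0int : Integrable T0 P := late_intg hT0meas hT0abs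
  -- denominator
  have hden : ∫ ω, (l1 (X ω) - l0 (X ω)) ∂P = (P C).toReal := by
    calc ∫ ω, (l1 (X ω) - l0 (X ω)) ∂P
        = ∫ ω, l1 (X ω) ∂P - ∫ ω, l0 (X ω) ∂P := integral_sub hl1int hl0int
      _ = ∫ ω, A1 ω ∂P - ∫ ω, A0 ω ∂P := by rw [hl1eq, hl0eq]
      _ = ∫ ω, (A1 ω - A0 ω) ∂P := (integral_sub hA1int hA0int).symm
      _ = ∫ ω, C.indicator (fun _ => (1:ℝ)) ω ∂P := integral_congr_ae hind
      _ = (P C).toReal := by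
          rw [integral_indicator hCmeas]
          simp
          rfl
  -- numerator
  have hnum : ∫ ω, (m1 (X ω) - m0 (X ω)) ∂P = ∫ ω in C, (Y1 ω - Y0 ω) ∂P := by
    calc ∫ ω, (m1 (X ω) - m0 (X ω)) ∂P
        = ∫ ω, m1 (X ω) ∂P - ∫ ω, m0 (X ω) ∂P := integral_sub hm1int hm0int
      _ = ∫ ω, T1 ω ∂P - ∫ ω, T0 ω ∂P := by rw [hm1eq, hm0eq]
      _ = ∫ ω, (T1 ω - T0 ω) ∂P := (integral_sub hT1int hT0int).symm
      _ = ∫ ω, (A1 ω - A0 ω) * (Y1 ω - Y0 ω) ∂P := by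
          refine integral_congr_ae (Filter.Eventually.of_forall fun ω => ?_)
          simp only [hT1def, hT0def]; ring
      _ = ∫ ω, C.indicator (fun ω => Y1 ω - Y0 ω) ω ∂P := integral_congr_ae hindY
      _ = ∫ ω in C, (Y1 ω - Y0 ω) ∂P := integral_indicator hCmeas
  exact ⟨hPC, by rw [hnum, hden]⟩
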